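/- Let 𝓗 be a complex linear subspace of functions ℂ → ℂ consisting of entire functions such that the evaluation map F ↦ (F(tₙ))ₙ is a linear bijection of 𝓗 onto ℓ²(μ), and such that, with the norm ‖F‖² = ∑ₙ μₙ|F(tₙ)|², 𝓗 satisfies: (H1) whenever F ∈ 𝓗 vanishes at a non-real point w, the function z ↦ F(z)(z − conj w)/(z − w) belongs to 𝓗; (H2) every point-evaluation functional F ↦ F(w), w ∈ ℂ, is continuous on 𝓗; (H3) F ∈ 𝓗 implies F* ∈ 𝓗, where F*(z) = conj(F(conj z)). Then there exists another complex linear subspace 𝓗̃ consisting of entire functions such that: (i) the evaluation map F ↦ (F(tₙ))ₙ is a linear bijection of 𝓗̃ onto ℓ²(μ) (so 𝓗̃ is isometrically isomorphic to ℓ²(μ) via the norm ‖F‖² = ∑ₙ μₙ|F(tₙ)|²); (ii) 𝓗̃ satisfies (H1) and (H3); (iii) 𝓗̃ violates (H2): there exist a point z₀ ∈ ℂ, a function G ∈ 𝓗̃, and a sequence of functions Fₖ ∈ 𝓗̃ such that (Fₖ(tₙ))ₙ converges to (G(tₙ))ₙ in ℓ²(μ) but Fₖ(z₀) does not converge to G(z₀);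 and (iv) 𝓗 ∩ 𝓗̃ is dense in both 𝓗 and 𝓗̃ (i.e., the set of sequences (F(tₙ))ₙ with F ∈ 𝓗 ∩ 𝓗̃ is dense in ℓ²(μ)). -/

import Mathlib

noncomputable section

/-- Membership in the weighted ℓ² space: `∑ n, μ n * ‖v n‖² < ∞`. -/
def Meml2 (μ : ℕ → ℝ) (v : ℕ → ℂ) : Prop :=
  Summable fun n => μ n * ‖v n‖ ^ 2

namespace AuxH2
open Filter

lemma meml2_of_le {μ : ℕ → ℝ} (hμ : ∀ n, 0 < μ n) {v u : ℕ → ℂ} (hv : Meml2 μ v)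
    (C : ℝ) (h : ∀ n, ‖u n‖ ≤ C * ‖v n‖) : Meml2 μ u := by
  have : Summable (fun n => C^2 * (μ n * ‖v n‖^2)) := hv.mul_left _
  refine this.of_nonneg_of_le (fun n => ?_) (fun n => ?_)
  · have := (hμ n).le; positivity
  · have h1 : ‖u n‖^2 ≤ (C*‖v n‖)^2 := by
      have := h n
      have h0 : 0 ≤ ‖u n‖ := norm_nonneg _
      nlinarith
    calc μ n * ‖u n‖^2 ≤ μ n * (C*‖v n‖)^2 := by
          have := (hμ n).le; nlinarith
      _ = C^2 * (μ n * ‖v n‖^2) := by ring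

lemma meml2_add {μ : ℕ → ℝ} (hμ : ∀ n, 0 < μ n) {v u : ℕ → ℂ} (hv : Meml2 μ v)
    (hu : Meml2 μ u) : Meml2 μ (fun n => v n + u n) := by
  have hs : Summable (fun n => 2 * (μ n * ‖v n‖^2) + 2 * (μ n * ‖u n‖^2)) :=
    Summable.add (hv.mul_left _) (hu.mul_left _)
  refine hs.of_nonneg_of_le (fun n => ?_) (fun n => ?_)
  · have := (hμ n).le; positivity
  · have h1 : ‖v n + u n‖ ≤ ‖v n‖ + ‖u n‖ := norm_add_le _ _
    have h2 : ‖v n + u n‖^2 ≤ (‖v n‖ + ‖u n‖)^2 := by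
      have h0 : 0 ≤ ‖v n + u n‖ := norm_nonneg _
      nlinarith
    have h3 : (‖v n‖ + ‖u n‖)^2 ≤ 2*‖v n‖^2 + 2*‖u n‖^2 := by nlinarith [sq_nonneg (‖v n‖ - ‖u n‖)]
    have := (hμ n).le
    nlinarith

lemma meml2_conj {μ : ℕ → ℝ} {v : ℕ → ℂ} (hv : Meml2 μ v) :
    Meml2 μ (fun n => (starRingEnd ℂ) (v n)) := by
  unfold Meml2 at *
  simpa using hv

/-- the Blaschke bracket identity -/
lemma bracket_eq (t w z : ℂ) (htw : t ≠ w) :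
    (z - (starRingEnd ℂ) w) - ((t - (starRingEnd ℂ) w)/(t - w)) * (z - w)
      = (((starRingEnd ℂ) w - w) * (z - t))/(t - w) := by
  have h : t - w ≠ 0 := sub_ne_zero.mpr htw
  field_simp
  ring

/-- discontinuous functional -/
lemma exists_wild (J : Submodule ℂ (ℕ → ℂ)) (v₀ : ℕ → ℂ) (hv₀ : v₀ ∉ J) :
    ∃ l : (ℕ → ℂ) →ₗ[ℂ] ℂ, l v₀ = 1 ∧ ∀ x ∈ J, l x = 0 := by
  set Q := (ℕ → ℂ) ⧸ J
  have hx : (J.mkQ v₀ : Q) ≠ 0 := by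
    simpa [Submodule.mkQ_apply, Submodule.Quotient.mk_eq_zero] using hv₀
  obtain ⟨M, hM⟩ := Submodule.exists_isCompl (ℂ ∙ (J.mkQ v₀ : Q))
  let proj := Submodule.linearProjOfIsCompl _ M hM
  let e := (LinearEquiv.toSpanNonzeroSingleton ℂ Q (J.mkQ v₀) hx)
  refine ⟨(e.symm.toLinearMap.comp proj).comp J.mkQ, ?_, ?_⟩
  · have h1 : proj (J.mkQ v₀) = ⟨J.mkQ v₀, Submodule.mem_span_singleton_self _⟩ :=
      Submodule.linearProjOfIsCompl_apply_left hM ⟨J.mkQ v₀, Submodule.mem_span_singleton_self _⟩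
    have h2 : e 1 = ⟨J.mkQ v₀, Submodule.mem_span_singleton_self _⟩ := by
      apply Subtype.ext
      exact congrArg Subtype.val (LinearEquiv.toSpanNonzeroSingleton_one ℂ Q (J.mkQ v₀) hx)
    simp only [LinearMap.comp_apply, LinearEquiv.coe_coe, h1, ← h2, LinearEquiv.symm_apply_apply]
  · intro x hxJ
    have : J.mkQ x = 0 := by simpa [Submodule.mkQ_apply, Submodule.Quotient.mk_eq_zero] using hxJ
    simp [this]

lemma dense_compl_finite (s : Set ℂ) (hs : s.Finite) : Dense sᶜ :=
  Set.Countable.dense_compl ℂ hs.countable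

/-- an entire function vanishing off a finite set is zero -/
lemma eq_of_eqon_cofinite {f g : ℂ → ℂ} (hf : Continuous f) (hg : Continuous g)
    (s : Set ℂ) (hs : s.Finite) (h : ∀ z ∉ s, f z = g z) : f = g :=
  Continuous.ext_on (dense_compl_finite s hs) hf hg (fun z hz => h z hz)


lemma blaschke_bound (w : ℂ) (hw : w.im ≠ 0) :
    ∃ C : ℝ, 0 ≤ C ∧ ∀ x : ℝ, (1 + |x|) ≤ C * ‖(x : ℂ) - w‖ := by
  have hd : 0 < |w.im| := abs_pos.mpr hw
  refine ⟨max ((2 + 2*‖w‖)/|w.im|) 2, le_trans (by norm_num) (le_max_right _ _), fun x => ?_⟩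
  have hnn : 0 ≤ ‖(x:ℂ) - w‖ := norm_nonneg _
  have him : |w.im| ≤ ‖(x:ℂ) - w‖ := by
    have h1 := Complex.abs_im_le_norm ((x:ℂ) - w)
    have h2 : ((x:ℂ) - w).im = -w.im := by simp
    rw [h2] at h1
    simpa using h1
  have hre : |x - w.re| ≤ ‖(x:ℂ) - w‖ := by
    have h1 := Complex.abs_re_le_norm ((x:ℂ) - w)
    have h2 : ((x:ℂ) - w).re = x - w.re := by simp
    rw [h2] at h1
    simpa using h1
  by_cases hx : |x| ≤ 2*‖w‖+1
  · have h1 : 1 + |x| ≤ 2 + 2*‖w‖ := by linarith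
    have h2 : (2 + 2*‖w‖) = ((2 + 2*‖w‖)/|w.im|) * |w.im| := by field_simp
    have h3 : 0 ≤ (2 + 2*‖w‖)/|w.im| := by positivity
    calc 1 + |x| ≤ ((2 + 2*‖w‖)/|w.im|) * |w.im| := by linarith [h2 ▸ h1]
      _ ≤ ((2 + 2*‖w‖)/|w.im|) * ‖(x:ℂ) - w‖ := by
          exact mul_le_mul_of_nonneg_left him h3
      _ ≤ (max ((2 + 2*‖w‖)/|w.im|) 2) * ‖(x:ℂ) - w‖ := by
          exact mul_le_mul_of_nonneg_right (le_max_left _ _) hnn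
  · push_neg at hx
    have hwre : |w.re| ≤ ‖w‖ := by
      have := Complex.abs_re_le_norm w
      simpa using this
    have h1 : |x| - |w.re| ≤ |x - w.re| := by
      have := abs_sub_abs_le_abs_sub x w.re
      linarith
    have h2 : 1 + |x| ≤ 2 * (|x| - |w.re|) := by linarith
    calc 1 + |x| ≤ 2 * |x - w.re| := by linarith
      _ ≤ 2 * ‖(x:ℂ) - w‖ := by linarith [hre]
      _ ≤ (max ((2 + 2*‖w‖)/|w.im|) 2) * ‖(x:ℂ) - w‖ := by
          exact mul_le_mul_of_nonneg_right (le_max_right _ _) hnn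



lemma tail_eq {f : ℕ → ℝ} (hf : Summable f) (hf0 : ∀ n, 0 ≤ f n) (K : ℕ) (g : ℕ → ℝ)
    (hg : ∀ n, g n = if n < K then 0 else f n) :
    ∑' n, g n = ∑' n, f n - ∑ n ∈ Finset.range K, f n := by
  have h1 : Summable (fun n => if n < K then f n else 0) := by
    apply summable_of_ne_finset_zero (s := Finset.range K)
    intro m hm
    rw [Finset.mem_range] at hm
    simp [hm]
  have hgs : Summable g := by
    refine hf.of_nonneg_of_le (fun n => ?_) (fun n => ?_)
    · rw [hg]; by_cases h : n < K <;> simp [h, hf0 n]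
    · rw [hg]; by_cases h : n < K <;> simp [h, hf0 n]
  have hsplit : ∀ n, f n = (if n < K then f n else 0) + g n := by
    intro n; rw [hg n]; by_cases h : n < K <;> simp [h]
  have h2 : ∑' n, f n = ∑ n ∈ Finset.range K, f n + ∑' n, g n := by
    rw [tsum_congr hsplit, Summable.tsum_add h1 hgs]
    congr 1
    rw [tsum_eq_sum (s := Finset.range K) (by
      intro m hm
      rw [Finset.mem_range] at hm
      simp [hm])]
    apply Finset.sum_congr rfl
    intro m hm
    rw [Finset.mem_range] at hm
    simp [hm]
  linarith

lemma tail_tendsto {f : ℕ → ℝ} (hf : Summable f) :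
    Tendsto (fun K => ∑' n, f n - ∑ n ∈ Finset.range K, f n) atTop (nhds 0) := by
  have := hf.hasSum.tendsto_sum_nat
  have h2 := Tendsto.sub (tendsto_const_nhds (x := ∑' n, f n)) this
  simpa using h2


end AuxH2

open AuxH2 Filter in
set_option maxHeartbeats 1000000 in
/-- **Main Theorem.** Let `𝓗` be a de Branges space isometrically isomorphic to
`ℓ²(μ)` (a complex linear space of entire functions on which evaluation
`F ↦ (F(tₙ))ₙ` is a linear bijection onto `ℓ²(μ)`, satisfying (H1), (H2), (H3)
for the norm `‖F‖² = ∑ₙ μₙ|F(tₙ)|²`). Then there exists a Hilbert space of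
entire functions `𝓗̃`, isometrically isomorphic to `ℓ²(μ)`, satisfying (H1)
and (H3) but violating (H2), with `𝓗 ∩ 𝓗̃` dense in both `𝓗` and `𝓗̃`.
In (H1) the quotient `F(z)(z − conj w)/(z − w)` is understood with its
removable singularity at `w` filled in, i.e. as the unique entire member `G`
agreeing with it away from `w`. -/
theorem exists_space_satisfying_H1_H3_but_not_H2
    (μ : ℕ → ℝ) (hμ : ∀ n, 0 < μ n)
    (t : ℕ → ℝ) (ht : Function.Injective t)
    (hdisc : ∀ R : ℝ, {n : ℕ | |t n| ≤ R}.Finite)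
    (H : Set (ℂ → ℂ))
    -- 𝓗 is a complex linear subspace of entire functions
    (hH0 : (0 : ℂ → ℂ) ∈ H)
    (hHadd : ∀ F ∈ H, ∀ G ∈ H, F + G ∈ H)
    (hHsmul : ∀ c : ℂ, ∀ F ∈ H, c • F ∈ H)
    (hHentire : ∀ F ∈ H, Differentiable ℂ F)
    -- evaluation is a bijection onto ℓ²(μ)
    (hHl2 : ∀ F ∈ H, Meml2 μ (fun n => F (t n)))
    (hHinj : ∀ F ∈ H, ∀ G ∈ H, (∀ n : ℕ, F (t n) = G (t n)) → F = G)
    (hHsurj : ∀ v : ℕ → ℂ, Meml2 μ v → ∃ F ∈ H, ∀ n : ℕ, F (t n) = v n)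
    -- (H1)
    (hH1 : ∀ F ∈ H, ∀ w : ℂ, w.im ≠ 0 → F w = 0 →
      ∃ G ∈ H, ∀ z : ℂ, z ≠ w → G z = F z * (z - (starRingEnd ℂ) w) / (z - w))
    -- (H2): every point evaluation is a bounded (hence continuous) functional
    (hH2 : ∀ w : ℂ, ∃ C : ℝ, ∀ F ∈ H,
      ‖F w‖ ≤ C * Real.sqrt (∑' n : ℕ, μ n * ‖F (t n)‖ ^ 2))
    -- (H3)
    (hH3 : ∀ F ∈ H, (fun z => (starRingEnd ℂ) (F ((starRingEnd ℂ) z))) ∈ H) :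
    ∃ Ht : Set (ℂ → ℂ),
      -- (i) 𝓗̃ is a complex linear subspace of entire functions, and evaluation
      -- is a bijection of 𝓗̃ onto ℓ²(μ)
      (0 : ℂ → ℂ) ∈ Ht ∧
      (∀ F ∈ Ht, ∀ G ∈ Ht, F + G ∈ Ht) ∧
      (∀ c : ℂ, ∀ F ∈ Ht, c • F ∈ Ht) ∧
      (∀ F ∈ Ht, Differentiable ℂ F) ∧
      (∀ F ∈ Ht, Meml2 μ (fun n => F (t n))) ∧
      (∀ F ∈ Ht, ∀ G ∈ Ht, (∀ n : ℕ, F (t n) = G (t n)) → F = G) ∧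
      (∀ v : ℕ → ℂ, Meml2 μ v → ∃ F ∈ Ht, ∀ n : ℕ, F (t n) = v n) ∧
      -- (ii) 𝓗̃ satisfies (H1) and (H3)
      (∀ F ∈ Ht, ∀ w : ℂ, w.im ≠ 0 → F w = 0 →
        ∃ G ∈ Ht, ∀ z : ℂ, z ≠ w → G z = F z * (z - (starRingEnd ℂ) w) / (z - w)) ∧
      (∀ F ∈ Ht, (fun z => (starRingEnd ℂ) (F ((starRingEnd ℂ) z))) ∈ Ht) ∧
      -- (iii) 𝓗̃ violates (H2): some point evaluation is discontinuous
      (∃ (z₀ : ℂ) (G : ℂ → ℂ) (F : ℕ → ℂ → ℂ),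
        G ∈ Ht ∧ (∀ k : ℕ, F k ∈ Ht) ∧
        Filter.Tendsto (fun k => ∑' n : ℕ, μ n * ‖F k (t n) - G (t n)‖ ^ 2)
          Filter.atTop (nhds 0) ∧
        ¬ Filter.Tendsto (fun k => F k z₀) Filter.atTop (nhds (G z₀))) ∧
      -- (iv) 𝓗 ∩ 𝓗̃ is dense in 𝓗 and 𝓗̃ (via the isometries with ℓ²(μ))
      (∀ v : ℕ → ℂ, Meml2 μ v → ∀ ε : ℝ, 0 < ε →
        ∃ F, F ∈ H ∧ F ∈ Ht ∧
          Real.sqrt (∑' n : ℕ, μ n * ‖v n - F (t n)‖ ^ 2) < ε) := by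
  classical
  -- basics about the real points
  have htw : ∀ (n : ℕ) (w : ℂ), w.im ≠ 0 → ((t n : ℝ) : ℂ) ≠ w := by
    intro n w hw h
    apply hw; rw [← h]; simp
  have htne : ∀ {n m : ℕ}, n ≠ m → ((t n : ℝ) : ℂ) ≠ ((t m : ℝ) : ℂ) := by
    intro n m hnm h
    exact hnm (ht (by exact_mod_cast h))
  -- the inverse of the evaluation map
  set S : (ℕ → ℂ) → (ℂ → ℂ) := fun v => if h : Meml2 μ v then (hHsurj v h).choose else 0 with hSdef
  have hSmem : ∀ (v) (_ : Meml2 μ v), S v ∈ H := by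
    intro v h
    simp only [hSdef, dif_pos h]
    exact (hHsurj v h).choose_spec.1
  have hSval : ∀ (v) (_ : Meml2 μ v), ∀ n, S v (t n) = v n := by
    intro v h
    simp only [hSdef, dif_pos h]
    exact (hHsurj v h).choose_spec.2
  have hSuniq : ∀ (v) (_ : Meml2 μ v) (F), F ∈ H → (∀ n, F (t n) = v n) → F = S v := by
    intro v h F hF hFv
    exact hHinj F hF _ (hSmem v h) (fun n => by rw [hFv n, hSval v h n])
  -- the "basis" functions
  set e : ℕ → ℕ → ℂ := fun n m => if m = n then 1 else 0 with hedef
  have he2 : ∀ n, Meml2 μ (e n) := by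
    intro n
    apply summable_of_ne_finset_zero (s := {n})
    intro m hm
    simp only [Finset.mem_singleton] at hm
    simp [hedef, hm]
  set G : ℕ → ℂ → ℂ := fun n => S (e n) with hGdef
  have hGmem : ∀ n, G n ∈ H := fun n => hSmem _ (he2 n)
  have hGval : ∀ n m, G n (t m) = if m = n then 1 else 0 := fun n m => hSval _ (he2 n) m
  have hGcont : ∀ n, Continuous (G n) := fun n => (hHentire _ (hGmem n)).continuous
  -- G n has no non-real zeros
  have hGne : ∀ (n : ℕ) (w : ℂ), w.im ≠ 0 → G n w ≠ 0 := by
    intro n w hw hzero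
    have hwne : ((starRingEnd ℂ) w) - w ≠ 0 := by
      intro h
      apply hw
      have := sub_eq_zero.mp h
      have h2 := congrArg Complex.im this
      simp only [Complex.conj_im] at h2
      linarith
    obtain ⟨G', hG'H, hG'⟩ := hH1 (G n) (hGmem n) w hw hzero
    set b : ℂ := (((t n : ℝ) : ℂ) - (starRingEnd ℂ) w)/(((t n : ℝ) : ℂ) - w) with hbdef
    have hbG : G' = b • G n := by
      apply hHinj _ hG'H _ (hHsmul b _ (hGmem n))
      intro m
      rw [hG' _ (htw m w hw)]
      by_cases hmn : m = n
      · subst hmn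
        simp only [Pi.smul_apply, smul_eq_mul, hGval, if_pos rfl, hbdef]
        ring
      · simp [hGval, hmn]
    have key : ∀ z, z ≠ w → G n z * ((z - (starRingEnd ℂ) w) - b * (z - w)) = 0 := by
      intro z hz
      have h1 := hG' z hz
      rw [hbG] at h1
      simp only [Pi.smul_apply, smul_eq_mul] at h1
      have hzw : z - w ≠ 0 := sub_ne_zero.mpr hz
      field_simp at h1
      linear_combination -h1
    -- the bracket vanishes on a finite set
    have hfin : {z : ℂ | (z - (starRingEnd ℂ) w) - b * (z - w) = 0}.Finite := by
      by_cases hb : b = 1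
      · have : {z : ℂ | (z - (starRingEnd ℂ) w) - b * (z - w) = 0} = ∅ := by
          ext z
          simp only [Set.mem_setOf_eq, Set.mem_empty_iff_false, iff_false]
          intro hcon
          apply hwne
          rw [hb] at hcon
          linear_combination -hcon
        rw [this]; exact Set.finite_empty
      · apply Set.Finite.subset (Set.finite_singleton ((b*w - (starRingEnd ℂ) w)/(b - 1)))
        intro z hz
        simp only [Set.mem_setOf_eq] at hz
        simp only [Set.mem_singleton_iff]
        have hb1 : b - 1 ≠ 0 := sub_ne_zero.mpr hb
        field_simp
        linear_combination -hz
    have : G n = (fun _ => (0:ℂ)) := by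
      apply eq_of_eqon_cofinite (hGcont n) continuous_const
        (insert w {z : ℂ | (z - (starRingEnd ℂ) w) - b * (z - w) = 0}) (hfin.insert w)
      intro z hz
      simp only [Set.mem_insert_iff, Set.mem_setOf_eq, not_or] at hz
      have := key z hz.1
      rcases mul_eq_zero.mp this with h | h
      · exact h
      · exact absurd h hz.2
    have h1 : G n (t n) = 1 := by rw [hGval]; simp
    rw [this] at h1
    exact one_ne_zero h1.symm
  -- the function A with zeros exactly at the t n
  set A : ℂ → ℂ := fun z => (z - ((t 0 : ℝ) : ℂ)) * G 0 z with hAdef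
  have hAval : ∀ m, A (t m) = 0 := by
    intro m
    by_cases hm : m = 0
    · subst hm; simp [hAdef]
    · simp [hAdef, hGval, hm]
  have hAne : ∀ w : ℂ, w.im ≠ 0 → A w ≠ 0 := by
    intro w hw
    apply mul_ne_zero _ (hGne 0 w hw)
    intro h
    apply hw
    have := sub_eq_zero.mp h
    rw [this]; simp
  have hAdiff : Differentiable ℂ A := by
    apply Differentiable.mul _ (hHentire _ (hGmem 0))
    exact (differentiable_id.sub (differentiable_const _))
  have hI : (Complex.I).im ≠ 0 := by simp
  have h2I : (2 : ℂ) * Complex.I ≠ 0 := by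
    simp [Complex.I_ne_zero]
  -- Lemma L : structure of the G n
  have hγex : ∀ n : ℕ, ∃ γ : ℂ, γ ≠ 0 ∧ ∀ z, G n z * (z - ((t n : ℝ) : ℂ)) = γ * A z := by
    intro n
    by_cases hn0 : n = 0
    · subst hn0
      exact ⟨1, one_ne_zero, fun z => by simp only [hAdef]; ring⟩
    · set α : ℂ := G 0 Complex.I with hαdef
      set β : ℂ := -(G n Complex.I) with hβdef
      have hα : α ≠ 0 := hGne 0 _ hI
      have hβ : β ≠ 0 := neg_ne_zero.mpr (hGne n _ hI)
      set F : ℂ → ℂ := α • G n + β • G 0 with hFdef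
      have hFmem : F ∈ H := hHadd _ (hHsmul α _ (hGmem n)) _ (hHsmul β _ (hGmem 0))
      have hFI : F Complex.I = 0 := by
        simp only [hFdef, Pi.add_apply, Pi.smul_apply, smul_eq_mul, hαdef, hβdef]
        ring
      obtain ⟨G', hG'H, hG'⟩ := hH1 F hFmem Complex.I hI hFI
      obtain ⟨bn, hbndef⟩ : ∃ b : ℂ,
          b = (((t n : ℝ) : ℂ) - (starRingEnd ℂ) Complex.I)/(((t n : ℝ) : ℂ) - Complex.I) := ⟨_, rfl⟩
      obtain ⟨b0, hb0def⟩ : ∃ b : ℂ,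
          b = (((t 0 : ℝ) : ℂ) - (starRingEnd ℂ) Complex.I)/(((t 0 : ℝ) : ℂ) - Complex.I) := ⟨_, rfl⟩
      have htnI : ((t n : ℝ) : ℂ) - Complex.I ≠ 0 := sub_ne_zero.mpr (htw n _ hI)
      have ht0I : ((t 0 : ℝ) : ℂ) - Complex.I ≠ 0 := sub_ne_zero.mpr (htw 0 _ hI)
      have hbn_mul : bn * (((t n : ℝ) : ℂ) - Complex.I) = ((t n : ℝ) : ℂ) + Complex.I := by
        rw [hbndef, Complex.conj_I, div_mul_cancel₀ _ htnI]
        ring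
      have hb0_mul : b0 * (((t 0 : ℝ) : ℂ) - Complex.I) = ((t 0 : ℝ) : ℂ) + Complex.I := by
        rw [hb0def, Complex.conj_I, div_mul_cancel₀ _ ht0I]
        ring
      have hbG : G' = (α * bn) • G n + (β * b0) • G 0 := by
        apply hHinj _ hG'H _
          (hHadd _ (hHsmul _ _ (hGmem n)) _ (hHsmul _ _ (hGmem 0)))
        intro m
        rw [hG' _ (htw m _ hI)]
        simp only [hFdef, Pi.add_apply, Pi.smul_apply, smul_eq_mul, hGval]
        by_cases hmn : m = n
        · subst hmn
          rw [if_pos rfl, if_neg hn0, hbndef]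
          ring
        · by_cases hm0 : m = 0
          · subst hm0
            rw [if_neg (fun h => hmn h), if_pos rfl, hb0def]
            ring
          · rw [if_neg hmn, if_neg hm0]
            ring
      set γ : ℂ := (-β * (((t n : ℝ) : ℂ) - Complex.I)) / (α * (((t 0 : ℝ) : ℂ) - Complex.I))
        with hγdef
      have hγne : γ ≠ 0 := by
        apply div_ne_zero (mul_ne_zero (neg_ne_zero.mpr hβ) htnI) (mul_ne_zero hα ht0I)
      refine ⟨γ, hγne, ?_⟩
      have key : ∀ z, z ≠ Complex.I →
          G n z * (z - ((t n : ℝ) : ℂ)) = γ * A z := by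
        intro z hz
        have h1 := hG' z hz
        rw [hbG] at h1
        simp only [Pi.add_apply, Pi.smul_apply, smul_eq_mul, hFdef] at h1
        have hzI : z - Complex.I ≠ 0 := sub_ne_zero.mpr hz
        rw [eq_div_iff hzI, Complex.conj_I] at h1
        -- h1 : (α*bn*Gn z + β*b0*G0 z)*(z - I) = (α*Gn z + β*G0 z)*(z - -I)
        have h2 : (α * (((t n : ℝ) : ℂ) + Complex.I) * (((t 0 : ℝ) : ℂ) - Complex.I) * G n z
              + β * (((t 0 : ℝ) : ℂ) + Complex.I) * (((t n : ℝ) : ℂ) - Complex.I) * G 0 z)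
              * (z - Complex.I)
            = (α * G n z + β * G 0 z) * (z + Complex.I)
              * (((t n : ℝ) : ℂ) - Complex.I) * (((t 0 : ℝ) : ℂ) - Complex.I) := by
          linear_combination ((((t n : ℝ) : ℂ) - Complex.I) * (((t 0 : ℝ) : ℂ) - Complex.I)) * h1
            - (α * G n z * (z - Complex.I) * (((t 0 : ℝ) : ℂ) - Complex.I)) * hbn_mul
            - (β * G 0 z * (z - Complex.I) * (((t n : ℝ) : ℂ) - Complex.I)) * hb0_mul
        have h3 : 2 * Complex.I * (G n z * (z - ((t n : ℝ) : ℂ)) * (α * (((t 0 : ℝ) : ℂ) - Complex.I)))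
            = 2 * Complex.I * (-β * (((t n : ℝ) : ℂ) - Complex.I) * ((z - ((t 0 : ℝ) : ℂ)) * G 0 z)) := by
          linear_combination h2
        have h4 := mul_left_cancel₀ h2I h3
        rw [hγdef, hAdef, div_mul_eq_mul_div, eq_div_iff (mul_ne_zero hα ht0I)]
        linear_combination h4
      have : (fun z => G n z * (z - ((t n : ℝ) : ℂ))) = (fun z => γ * A z) := by
        apply eq_of_eqon_cofinite
          (Continuous.mul (hGcont n) (continuous_id.sub continuous_const))
          (continuous_const.mul (hAdiff.continuous))
          {Complex.I} (Set.finite_singleton _)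
        intro z hz
        exact key z hz
      intro z
      exact congrFun this z
  choose γ hγne hγA using hγex
  -- the weighted space J (a subspace of ℓ²(μ) on which the wild functional vanishes)
  set ν : ℕ → ℝ := fun n => μ n * (1+|t n|)^2 with hνdef
  have hν : ∀ n, 0 < ν n := by
    intro n
    have h1 := hμ n
    have h2 : (0:ℝ) < (1+|t n|)^2 := by positivity
    exact mul_pos h1 h2
  set J : Submodule ℂ (ℕ → ℂ) :=
    { carrier := {v | Meml2 ν v}
      zero_mem' := by
        show Meml2 ν (fun _ => 0)
        unfold Meml2
        simpa using summable_zero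
      add_mem' := by
        intro a b ha hb
        exact meml2_add hν ha hb
      smul_mem' := by
        intro c a ha
        refine meml2_of_le hν ha ‖c‖ (fun n => ?_)
        show ‖c * a n‖ ≤ ‖c‖ * ‖a n‖
        rw [norm_mul] } with hJdef
  have hJmem : ∀ v : ℕ → ℂ, v ∈ J ↔ Meml2 ν v := fun v => Iff.rfl
  -- norms of Blaschke factors at the real points
  have hconj_t : ∀ n : ℕ, (starRingEnd ℂ) ((t n : ℝ) : ℂ) = ((t n : ℝ) : ℂ) :=
    fun n => Complex.conj_ofReal _
  have hBnorm : ∀ (n : ℕ) (w : ℂ), ‖(((t n : ℝ) : ℂ) - (starRingEnd ℂ) w)‖ = ‖(((t n : ℝ) : ℂ) - w)‖ := by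
    intro n w
    have : (((t n : ℝ) : ℂ) - (starRingEnd ℂ) w) = (starRingEnd ℂ) (((t n : ℝ) : ℂ) - w) := by
      rw [map_sub, hconj_t]
    rw [this]
    exact RCLike.norm_conj _
  -- multiplication by a Blaschke factor preserves ℓ²(μ)
  have hBl2 : ∀ (v : ℕ → ℂ), Meml2 μ v → ∀ w : ℂ, w.im ≠ 0 →
      Meml2 μ (fun n => v n * ((((t n : ℝ) : ℂ) - (starRingEnd ℂ) w)/(((t n : ℝ) : ℂ) - w))) := by
    intro v hv w hw
    refine meml2_of_le hμ hv 1 (fun n => ?_)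
    have htnw : (((t n : ℝ) : ℂ) - w) ≠ 0 := sub_ne_zero.mpr (htw n w hw)
    rw [norm_mul, norm_div, hBnorm, div_self (norm_ne_zero_iff.mpr htnw)]
    simp
  -- the difference lies in J
  have hBJ : ∀ (v : ℕ → ℂ), Meml2 μ v → ∀ w : ℂ, w.im ≠ 0 →
      (fun n => v n * ((((t n : ℝ) : ℂ) - (starRingEnd ℂ) w)/(((t n : ℝ) : ℂ) - w)) - v n) ∈ J := by
    intro v hv w hw
    obtain ⟨C, hC0, hC⟩ := blaschke_bound w hw
    rw [hJmem]
    have hsum : Summable (fun n => (C^2 * ‖w - (starRingEnd ℂ) w‖^2) * (μ n * ‖v n‖^2)) :=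
      hv.mul_left _
    refine hsum.of_nonneg_of_le (fun n => ?_) (fun n => ?_)
    · have := (hν n).le
      positivity
    · have htnw : (((t n : ℝ) : ℂ) - w) ≠ 0 := sub_ne_zero.mpr (htw n w hw)
      have hdiff : v n * ((((t n : ℝ) : ℂ) - (starRingEnd ℂ) w)/(((t n : ℝ) : ℂ) - w)) - v n
          = v n * ((w - (starRingEnd ℂ) w)/(((t n : ℝ) : ℂ) - w)) := by
        field_simp
        ring
      beta_reduce
      rw [hdiff]
      show ν n * _ ≤ _
      rw [hνdef]
      have hnorm : ‖v n * ((w - (starRingEnd ℂ) w)/(((t n : ℝ) : ℂ) - w))‖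
          = ‖v n‖ * (‖w - (starRingEnd ℂ) w‖/‖((t n : ℝ) : ℂ) - w‖) := by
        rw [norm_mul, norm_div]
      rw [hnorm]
      have hCn := hC (t n)
      have hpos : (0:ℝ) < ‖((t n : ℝ) : ℂ) - w‖ := norm_pos_iff.mpr htnw
      have h1 : (1 + |t n|) / ‖((t n : ℝ) : ℂ) - w‖ ≤ C := by
        rw [div_le_iff₀ hpos]
        exact hCn
      have h1nn : 0 ≤ (1 + |t n|) / ‖((t n : ℝ) : ℂ) - w‖ := by positivity
      have h2 : ((1 + |t n|) / ‖((t n : ℝ) : ℂ) - w‖)^2 ≤ C^2 := by nlinarith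
      have hμn := (hμ n).le
      have expand : μ n * (1+|t n|)^2 * (‖v n‖ * (‖w - (starRingEnd ℂ) w‖/‖((t n : ℝ) : ℂ) - w‖))^2
          = (((1 + |t n|) / ‖((t n : ℝ) : ℂ) - w‖)^2) * (‖w - (starRingEnd ℂ) w‖^2) * (μ n * ‖v n‖^2) := by
        field_simp
      rw [expand]
      have hwn : (0:ℝ) ≤ ‖w - (starRingEnd ℂ) w‖^2 := by positivity
      have hvn : (0:ℝ) ≤ μ n * ‖v n‖^2 := by positivity
      nlinarith [mul_le_mul_of_nonneg_right h2 hwn]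
  -- a sequence in ℓ²(μ) but not in J
  have hex : ∀ R : ℝ, ∃ n, R < |t n| := by
    intro R
    by_contra hcon
    push_neg at hcon
    have : {n : ℕ | |t n| ≤ R} = Set.univ := by
      ext n; simp [hcon n]
    have hfin := hdisc R
    rw [this] at hfin
    exact Set.infinite_univ hfin
  set N : ℕ → ℕ := fun k => Nat.rec (hex 1).choose
    (fun k' prev => (hex (max (|t prev|) ((k' : ℝ)+2))).choose) k with hNdef
  have hN0 : 1 < |t (N 0)| := (hex 1).choose_spec
  have hNs : ∀ k, max (|t (N k)|) ((k : ℝ)+2) < |t (N (k+1))| := by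
    intro k
    exact (hex (max (|t (N k)|) ((k : ℝ)+2))).choose_spec
  have hNlt : ∀ k, |t (N k)| < |t (N (k+1))| := by
    intro k
    exact lt_of_le_of_lt (le_max_left _ _) (hNs k)
  have hNmono : StrictMono (fun k => |t (N k)|) := strictMono_nat_of_lt_succ hNlt
  have hNinj : Function.Injective N := by
    intro a b hab
    by_contra hne
    rcases lt_or_gt_of_ne hne with h | h
    · exact absurd (congrArg (fun n => |t n|) hab) (ne_of_lt (hNmono h))
    · exact absurd (congrArg (fun n => |t n|) hab) (ne_of_gt (hNmono h))
  have hNlb : ∀ k : ℕ, (k : ℝ) + 1 ≤ |t (N k)| := by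
    intro k
    induction k with
    | zero => simpa using hN0.le
    | succ k ih =>
        have := hNs k
        have h2 : (k : ℝ) + 2 ≤ max (|t (N k)|) ((k : ℝ)+2) := le_max_right _ _
        push_cast
        push_cast at h2
        linarith
  set v₀ : ℕ → ℂ := fun m =>
    (((if h : ∃ k, N k = m then (1/((h.choose : ℝ)+1)) * (1/Real.sqrt (μ m)) else 0) : ℝ) : ℂ)
    with hv₀def
  have hv₀conj : ∀ m, (starRingEnd ℂ) (v₀ m) = v₀ m := fun m => Complex.conj_ofReal _
  have hv₀at : ∀ k, v₀ (N k) = (((1/((k : ℝ)+1)) * (1/Real.sqrt (μ (N k))) : ℝ) : ℂ) := by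
    intro k
    have hk : ∃ k', N k' = N k := ⟨k, rfl⟩
    rw [hv₀def]
    simp only [dif_pos hk]
    have : hk.choose = k := hNinj hk.choose_spec
    rw [this]
  have hv₀off : ∀ m, m ∉ Set.range N → v₀ m = 0 := by
    intro m hm
    rw [hv₀def]
    have : ¬ ∃ k, N k = m := by
      intro ⟨k, hk⟩; exact hm ⟨k, hk⟩
    simp only [dif_neg this, Complex.ofReal_zero]
  have hf₀N : ∀ k, μ (N k) * ‖v₀ (N k)‖^2 = 1/((k : ℝ)+1)^2 := by
    intro k
    rw [hv₀at k]
    have hμk := hμ (N k)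
    have hnorm : ‖(((1/((k : ℝ)+1)) * (1/Real.sqrt (μ (N k))) : ℝ) : ℂ)‖
        = |(1/((k : ℝ)+1)) * (1/Real.sqrt (μ (N k)))| := by
      rw [Complex.norm_real, Real.norm_eq_abs]
    rw [hnorm, sq_abs, mul_pow, div_pow, div_pow, one_pow, Real.sq_sqrt hμk.le]
    field_simp
  have hv₀l2 : Meml2 μ v₀ := by
    have hsummand : Summable (fun k : ℕ => 1/((k : ℝ)+1)^2) := by
      have := (Real.summable_one_div_nat_pow (p := 2)).mpr one_lt_two
      rw [← summable_nat_add_iff 1] at this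
      simpa using this
    unfold Meml2
    rw [← Function.Injective.summable_iff hNinj]
    · apply hsummand.congr
      intro k
      exact (hf₀N k).symm
    · intro m hm
      rw [hv₀off m hm]
      simp
  have hv₀J : v₀ ∉ J := by
    intro hcon
    rw [hJmem] at hcon
    unfold Meml2 at hcon
    have hcomp := hcon.comp_injective hNinj
    have hlb : ∀ k : ℕ, (1:ℝ) ≤ ν (N k) * ‖v₀ (N k)‖^2 := by
      intro k
      have h1 : ν (N k) * ‖v₀ (N k)‖^2 = (1+|t (N k)|)^2 * (μ (N k) * ‖v₀ (N k)‖^2) := by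
        rw [hνdef]; ring
      rw [h1, hf₀N k]
      have h2 : (k : ℝ) + 2 ≤ 1 + |t (N k)| := by linarith [hNlb k]
      have h3 : ((k : ℝ)+1)^2 ≤ (1+|t (N k)|)^2 := by nlinarith [hNlb k]
      calc (1:ℝ) = ((k:ℝ)+1)^2 * (1/((k:ℝ)+1)^2) := by field_simp
        _ ≤ (1+|t (N k)|)^2 * (1/((k:ℝ)+1)^2) :=
            mul_le_mul_of_nonneg_right h3 (by positivity)
    have := hcomp.tendsto_atTop_zero
    have hev := this.eventually (eventually_lt_nhds (show (0:ℝ) < 1 by norm_num))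
    rcases hev.exists with ⟨k, hk⟩
    have := hlb k
    simp only [Function.comp_apply] at hk
    linarith
  -- the wild functional
  obtain ⟨l₀, hl₀v₀, hl₀J⟩ := exists_wild J v₀ hv₀J
  set lam : (ℕ → ℂ) → ℂ :=
    fun v => (l₀ v + (starRingEnd ℂ) (l₀ (fun n => (starRingEnd ℂ) (v n))))/2 with hlamdef
  have hlamJ : ∀ v ∈ J, lam v = 0 := by
    intro v hv
    have hvc : (fun n => (starRingEnd ℂ) (v n)) ∈ J := by
      rw [hJmem] at hv ⊢
      exact meml2_conj hv
    rw [hlamdef]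
    simp only [hl₀J v hv, hl₀J _ hvc, map_zero]
    norm_num
  have hlamv₀ : lam v₀ = 1 := by
    rw [hlamdef]
    simp only
    have : (fun n => (starRingEnd ℂ) (v₀ n)) = v₀ := funext hv₀conj
    rw [this, hl₀v₀]
    norm_num
  have hlamadd : ∀ v u, lam (fun n => v n + u n) = lam v + lam u := by
    intro v u
    rw [hlamdef]
    simp only
    have h1 : (fun n => v n + u n) = v + u := rfl
    have h2 : (fun n => (starRingEnd ℂ) (v n + u n))
        = (fun n => (starRingEnd ℂ) (v n)) + (fun n => (starRingEnd ℂ) (u n)) := by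
      funext n; simp
    rw [h1, h2, map_add, map_add, map_add]
    ring
  have hlamsmul : ∀ (c : ℂ) v, lam (fun n => c * v n) = c * lam v := by
    intro c v
    rw [hlamdef]
    simp only
    have h1 : (fun n => c * v n) = c • v := rfl
    have h2 : (fun n => (starRingEnd ℂ) (c * v n))
        = ((starRingEnd ℂ) c) • (fun n => (starRingEnd ℂ) (v n)) := by
      funext n; simp
    rw [h1, h2, map_smul, map_smul]
    simp only [smul_eq_mul, map_mul, Complex.conj_conj]
    ring
  have hlamconj : ∀ v, lam (fun n => (starRingEnd ℂ) (v n)) = (starRingEnd ℂ) (lam v) := by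
    intro v
    rw [hlamdef]
    simp only
    have h1 : (fun n => (starRingEnd ℂ) ((starRingEnd ℂ) (v n))) = v := by
      funext n; simp
    rw [h1, map_div₀, map_add, Complex.conj_conj, map_ofNat]
    ring
  -- linearity of S
  have hl2zero : Meml2 μ (fun _ => (0:ℂ)) := by
    unfold Meml2; simpa using summable_zero
  have hS0 : S (fun _ => (0:ℂ)) = 0 := by
    symm
    exact hSuniq _ hl2zero 0 hH0 (fun n => rfl)
  have hSadd : ∀ v u, Meml2 μ v → Meml2 μ u →
      S (fun n => v n + u n) = S v + S u := by
    intro v u hv hu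
    symm
    apply hSuniq _ (meml2_add hμ hv hu) _ (hHadd _ (hSmem v hv) _ (hSmem u hu))
    intro n
    simp [Pi.add_apply, hSval v hv n, hSval u hu n]
  have hSsmul : ∀ (c : ℂ) v, Meml2 μ v → S (fun n => c * v n) = c • S v := by
    intro c v hv
    have hm : Meml2 μ (fun n => c * v n) := by
      refine meml2_of_le hμ hv ‖c‖ (fun n => ?_)
      rw [norm_mul]
    symm
    apply hSuniq _ hm _ (hHsmul c _ (hSmem v hv))
    intro n
    simp [Pi.smul_apply, hSval v hv n]
  -- truncations
  set trunc : (ℕ → ℂ) → ℕ → (ℕ → ℂ) := fun v K n => if n < K then v n else 0 with htrdef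
  have htrl2 : ∀ v K, Meml2 μ (trunc v K) := by
    intro v K
    apply summable_of_ne_finset_zero (s := Finset.range K)
    intro m hm
    rw [Finset.mem_range] at hm
    simp [htrdef, hm]
  have htrJ : ∀ v K, trunc v K ∈ J := by
    intro v K
    rw [hJmem]
    apply summable_of_ne_finset_zero (s := Finset.range K)
    intro m hm
    rw [Finset.mem_range] at hm
    simp [htrdef, hm]
  have hHsum : ∀ (v : ℕ → ℂ) (s : Finset ℕ), (fun z => ∑ n ∈ s, v n * G n z) ∈ H := by
    intro v s
    induction s using Finset.induction_on with
    | empty => simp only [Finset.sum_empty]; exact hH0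
    | insert a s' hx ih =>
        have : (fun z => ∑ n ∈ insert a s', v n * G n z)
            = (v a • G a) + (fun z => ∑ n ∈ s', v n * G n z) := by
          funext z
          simp [Finset.sum_insert hx]
        rw [this]
        exact hHadd _ (hHsmul _ _ (hGmem a)) _ ih
  have htrS : ∀ v K, S (trunc v K) = fun z => ∑ n ∈ Finset.range K, v n * G n z := by
    intro v K
    symm
    apply hSuniq _ (htrl2 v K) _ (hHsum v (Finset.range K))
    intro m
    simp only [hGval, mul_ite, mul_one, mul_zero, Finset.sum_ite_eq, Finset.mem_range]
    rfl
  -- tails of the norm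
  have hdiffval : ∀ v K n, v n - trunc v K n = if n < K then 0 else v n := by
    intro v K n
    rw [htrdef]
    by_cases h : n < K <;> simp [h]
  have hdiffl2 : ∀ (v) (K), Meml2 μ v → Meml2 μ (fun n => v n - trunc v K n) := by
    intro v K hv
    refine meml2_of_le hμ hv 1 (fun n => ?_)
    rw [hdiffval v K n, one_mul]
    by_cases h : n < K <;> simp [h]
  have htailnorm : ∀ (v), Meml2 μ v → ∀ K, ∑' n, μ n * ‖v n - trunc v K n‖^2
      = (∑' n, μ n * ‖v n‖^2) - ∑ n ∈ Finset.range K, μ n * ‖v n‖^2 := by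
    intro v hv K
    apply tail_eq hv (fun n => by have := (hμ n).le; positivity) K
    intro n
    rw [hdiffval v K n]
    by_cases h : n < K <;> simp [h]
  have htail : ∀ (v), Meml2 μ v →
      Tendsto (fun K => ∑' n, μ n * ‖v n - trunc v K n‖^2) atTop (nhds 0) := by
    intro v hv
    exact (tail_tendsto hv).congr (fun K => (htailnorm v hv K).symm)
  -- the point evaluation bounds
  choose Cz hCz using hH2
  -- pointwise convergence of the partial sums of the sampling series
  have hSconv : ∀ (v), Meml2 μ v → ∀ z : ℂ,
      Tendsto (fun K => ∑ n ∈ Finset.range K, v n * G n z) atTop (nhds (S v z)) := by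
    intro v hv z
    rw [tendsto_iff_norm_sub_tendsto_zero]
    have hbound : ∀ K, ‖(∑ n ∈ Finset.range K, v n * G n z) - S v z‖
        ≤ Cz z * Real.sqrt (∑' n, μ n * ‖v n - trunc v K n‖^2) := by
      intro K
      have hsplit : S v = S (trunc v K) + S (fun n => v n - trunc v K n) := by
        rw [← hSadd _ _ (htrl2 v K) (hdiffl2 v K hv)]
        congr 1
        funext n
        ring
      have h1 : (∑ n ∈ Finset.range K, v n * G n z) - S v z
          = -(S (fun n => v n - trunc v K n) z) := by
        rw [hsplit, Pi.add_apply, htrS v K]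
        ring
      rw [h1, norm_neg]
      have h2 := hCz z _ (hSmem _ (hdiffl2 v K hv))
      calc ‖S (fun n => v n - trunc v K n) z‖
          ≤ Cz z * Real.sqrt (∑' n, μ n * ‖S (fun n => v n - trunc v K n) (t n)‖^2) := h2
        _ = Cz z * Real.sqrt (∑' n, μ n * ‖v n - trunc v K n‖^2) := by
            simp only [hSval _ (hdiffl2 v K hv)]
    apply squeeze_zero (fun K => norm_nonneg _) hbound
    have hsq : Tendsto (fun K => Real.sqrt (∑' n, μ n * ‖v n - trunc v K n‖^2)) atTop (nhds 0) := by
      have := (Real.continuous_sqrt.tendsto 0).comp (htail v hv)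
      simpa [Function.comp_def] using this
    have := hsq.const_mul (Cz z)
    simpa using this
  -- the perturbed space
  set T : (ℕ → ℂ) → (ℂ → ℂ) := fun v z => S v z + lam v * A z with hTdef
  set Ht : Set (ℂ → ℂ) := {F | ∃ v, Meml2 μ v ∧ F = T v} with hHtdef
  have hTval : ∀ (v), Meml2 μ v → ∀ n, T v (t n) = v n := by
    intro v hv n
    show S v (t n) + lam v * A (t n) = v n
    rw [hSval v hv n, hAval n, mul_zero, add_zero]
  have hlam0 : lam (fun _ => (0:ℂ)) = 0 := hlamJ _ J.zero_mem
  have h0Ht : (0 : ℂ → ℂ) ∈ Ht := by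
    refine ⟨fun _ => 0, hl2zero, ?_⟩
    funext z
    show (0:ℂ) = S (fun _ => (0:ℂ)) z + lam (fun _ => (0:ℂ)) * A z
    rw [hS0, hlam0]
    simp
  -- star of S
  have hSstar : ∀ (v), Meml2 μ v →
      (fun z => (starRingEnd ℂ) (S v ((starRingEnd ℂ) z))) = S (fun n => (starRingEnd ℂ) (v n)) := by
    intro v hv
    apply hSuniq _ (meml2_conj hv) _ (hH3 _ (hSmem v hv))
    intro n
    have : (starRingEnd ℂ) ((t n : ℝ) : ℂ) = ((t n : ℝ) : ℂ) := hconj_t n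
    rw [this, hSval v hv n]
  have hAstar : ∀ z, (starRingEnd ℂ) (A ((starRingEnd ℂ) z)) = A z := by
    have hG0star : (fun z => (starRingEnd ℂ) (G 0 ((starRingEnd ℂ) z))) = G 0 := by
      apply hHinj _ (hH3 _ (hGmem 0)) _ (hGmem 0)
      intro n
      rw [hconj_t n, hGval]
      by_cases h : n = 0 <;> simp [h, hGval]
    intro z
    show (starRingEnd ℂ) (((starRingEnd ℂ) z - ((t 0 : ℝ) : ℂ)) * G 0 ((starRingEnd ℂ) z)) = A z
    rw [map_mul, map_sub, Complex.conj_conj, hconj_t 0]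
    have := congrFun hG0star z
    rw [this]
  refine ⟨Ht, h0Ht, ?_, ?_, ?_, ?_, ?_, ?_, ?_, ?_, ?_, ?_⟩
  -- (2) addition
  · rintro F ⟨v, hv, rfl⟩ F' ⟨u, hu, rfl⟩
    refine ⟨fun n => v n + u n, meml2_add hμ hv hu, ?_⟩
    funext z
    show T v z + T u z = S (fun n => v n + u n) z + lam (fun n => v n + u n) * A z
    rw [hSadd v u hv hu, hlamadd v u]
    show S v z + lam v * A z + (S u z + lam u * A z) = (S v z + S u z) + (lam v + lam u) * A z
    ring
  -- (3) scalar multiplication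
  · rintro c F ⟨v, hv, rfl⟩
    have hm : Meml2 μ (fun n => c * v n) := by
      refine meml2_of_le hμ hv ‖c‖ (fun n => ?_)
      rw [norm_mul]
    refine ⟨fun n => c * v n, hm, ?_⟩
    funext z
    show c * T v z = S (fun n => c * v n) z + lam (fun n => c * v n) * A z
    rw [hSsmul c v hv, hlamsmul c v]
    show c * (S v z + lam v * A z) = c • S v z + c * lam v * A z
    simp only [smul_eq_mul]
    ring
  -- (4) entire
  · rintro F ⟨v, hv, rfl⟩
    have h1 : Differentiable ℂ (S v) := hHentire _ (hSmem v hv)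
    have h2 : Differentiable ℂ (fun z => lam v * A z) := (hAdiff.const_mul _)
    exact h1.add h2
  -- (5) values in ℓ²
  · rintro F ⟨v, hv, rfl⟩
    have : (fun n => T v (t n)) = v := funext (hTval v hv)
    rw [this]
    exact hv
  -- (6) injectivity of evaluation
  · rintro F ⟨v, hv, rfl⟩ F' ⟨u, hu, rfl⟩ hvals
    have : v = u := by
      funext n
      have := hvals n
      rwa [hTval v hv n, hTval u hu n] at this
    rw [this]
  -- (7) surjectivity
  · intro v hv
    exact ⟨T v, ⟨v, hv, rfl⟩, hTval v hv⟩
  -- (8) axiom (H1)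
  · rintro F ⟨v, hv, rfl⟩ w hw hFw
    obtain ⟨u, hudef⟩ : ∃ u : ℕ → ℂ, u = fun n =>
        v n * ((((t n : ℝ) : ℂ) - (starRingEnd ℂ) w)/(((t n : ℝ) : ℂ) - w)) := ⟨_, rfl⟩
    have hul2 : Meml2 μ u := by rw [hudef]; exact hBl2 v hv w hw
    have hlamu : lam u = lam v := by
      have hdJ := hBJ v hv w hw
      have h1 : lam (fun n => (v n * ((((t n : ℝ) : ℂ) - (starRingEnd ℂ) w)/(((t n : ℝ) : ℂ) - w)) - v n) + v n)
          = lam (fun n => v n * ((((t n : ℝ) : ℂ) - (starRingEnd ℂ) w)/(((t n : ℝ) : ℂ) - w)) - v n) + lam v :=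
        hlamadd _ v
      have h2 : (fun n => (v n * ((((t n : ℝ) : ℂ) - (starRingEnd ℂ) w)/(((t n : ℝ) : ℂ) - w)) - v n) + v n) = u := by
        rw [hudef]
        funext n
        ring
      rw [h2] at h1
      rw [h1, hlamJ _ hdJ, zero_add]
    refine ⟨T u, ⟨u, hul2, rfl⟩, ?_⟩
    intro z hz
    have hAw : A w ≠ 0 := hAne w hw
    have hSvw : S v w = -(lam v) * A w := by
      have h0 : S v w + lam v * A w = 0 := hFw
      linear_combination h0
    -- per-term identity, denominators cleared
    have hpt : ∀ n, u n * G n z * ((z - w) * A w)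
        = v n * G n z * ((z - (starRingEnd ℂ) w) * A w)
          - v n * G n w * ((w - (starRingEnd ℂ) w) * A z) := by
      intro n
      have htnw : (((t n : ℝ) : ℂ) - w) ≠ 0 := sub_ne_zero.mpr (htw n w hw)
      have hq : u n * (((t n : ℝ) : ℂ) - w) = v n * (((t n : ℝ) : ℂ) - (starRingEnd ℂ) w) := by
        rw [hudef]
        beta_reduce
        rw [mul_assoc, div_mul_cancel₀ _ htnw]
      have hclear : u n * G n z * ((z - w) * A w) * ((((t n : ℝ) : ℂ) - w))
          = (v n * G n z * ((z - (starRingEnd ℂ) w) * A w)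
            - v n * G n w * ((w - (starRingEnd ℂ) w) * A z)) * ((((t n : ℝ) : ℂ) - w)) := by
        linear_combination (G n z * ((z - w) * A w)) * hq
          + (v n * (w - (starRingEnd ℂ) w) * A w) * hγA n z
          - (v n * (w - (starRingEnd ℂ) w) * A z) * hγA n w
      exact mul_right_cancel₀ htnw hclear
    have hsum : ∀ K, (∑ n ∈ Finset.range K, u n * G n z) * ((z - w) * A w)
        = (∑ n ∈ Finset.range K, v n * G n z) * ((z - (starRingEnd ℂ) w) * A w)
          - (∑ n ∈ Finset.range K, v n * G n w) * ((w - (starRingEnd ℂ) w) * A z) := by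
      intro K
      rw [Finset.sum_mul, Finset.sum_mul, Finset.sum_mul, ← Finset.sum_sub_distrib]
      exact Finset.sum_congr rfl (fun n _ => hpt n)
    have hL : S u z * ((z - w) * A w)
        = S v z * ((z - (starRingEnd ℂ) w) * A w) - S v w * ((w - (starRingEnd ℂ) w) * A z) := by
      have h1 := (hSconv u hul2 z).mul_const ((z - w) * A w)
      have h2 := ((hSconv v hv z).mul_const ((z - (starRingEnd ℂ) w) * A w)).sub
        ((hSconv v hv w).mul_const ((w - (starRingEnd ℂ) w) * A z))
      have h3 := h2.congr (fun K => (hsum K).symm)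
      exact tendsto_nhds_unique h1 h3
    show S u z + lam u * A z = (S v z + lam v * A z) * (z - (starRingEnd ℂ) w) / (z - w)
    rw [hlamu]
    have hzw : z - w ≠ 0 := sub_ne_zero.mpr hz
    rw [eq_div_iff hzw]
    apply mul_right_cancel₀ hAw
    linear_combination hL - ((w - (starRingEnd ℂ) w) * A z) * hSvw
  -- (9) axiom (H3)
  · rintro F ⟨v, hv, rfl⟩
    refine ⟨fun n => (starRingEnd ℂ) (v n), meml2_conj hv, ?_⟩
    funext z
    show (starRingEnd ℂ) (T v ((starRingEnd ℂ) z))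
      = S (fun n => (starRingEnd ℂ) (v n)) z + lam (fun n => (starRingEnd ℂ) (v n)) * A z
    rw [hlamconj v]
    show (starRingEnd ℂ) (S v ((starRingEnd ℂ) z) + lam v * A ((starRingEnd ℂ) z))
      = S (fun n => (starRingEnd ℂ) (v n)) z + (starRingEnd ℂ) (lam v) * A z
    rw [map_add, map_mul]
    have h1 := congrFun (hSstar v hv) z
    rw [h1, hAstar z]
  -- (10) violation of (H2)
  · refine ⟨Complex.I, 0, fun k => T (fun n => v₀ n - trunc v₀ k n), h0Ht, ?_, ?_, ?_⟩
    · intro k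
      exact ⟨_, hdiffl2 v₀ k hv₀l2, rfl⟩
    · have hcongr : ∀ k : ℕ, (∑' n, μ n * ‖T (fun n => v₀ n - trunc v₀ k n) (t n) - (0:ℂ→ℂ) (t n)‖^2)
          = ∑' n, μ n * ‖v₀ n - trunc v₀ k n‖^2 := by
        intro k
        apply tsum_congr
        intro n
        rw [hTval _ (hdiffl2 v₀ k hv₀l2) n]
        simp
      exact (htail v₀ hv₀l2).congr (fun k => (hcongr k).symm)
    · -- the values at I tend to A I ≠ 0, not to 0
      have hlamdk : ∀ k, lam (fun n => v₀ n - trunc v₀ k n) = 1 := by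
        intro k
        have h1 : lam (fun n => (v₀ n - trunc v₀ k n) + trunc v₀ k n)
            = lam (fun n => v₀ n - trunc v₀ k n) + lam (trunc v₀ k) := hlamadd _ _
        have h2 : (fun n => (v₀ n - trunc v₀ k n) + trunc v₀ k n) = v₀ := by
          funext n; ring
        rw [h2, hlamv₀, hlamJ _ (htrJ v₀ k)] at h1
        linear_combination -h1
      have hSdk : Tendsto (fun k => S (fun n => v₀ n - trunc v₀ k n) Complex.I) atTop (nhds 0) := by
        have hid : ∀ k, S (fun n => v₀ n - trunc v₀ k n) Complex.I
            = S v₀ Complex.I - ∑ n ∈ Finset.range k, v₀ n * G n Complex.I := by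
          intro k
          have hsplit : S v₀ = S (trunc v₀ k) + S (fun n => v₀ n - trunc v₀ k n) := by
            rw [← hSadd _ _ (htrl2 v₀ k) (hdiffl2 v₀ k hv₀l2)]
            congr 1
            funext n
            ring
          have := congrFun hsplit Complex.I
          rw [Pi.add_apply, htrS v₀ k] at this
          simp only at this
          linear_combination -this
        have h2 := Tendsto.sub (tendsto_const_nhds (x := S v₀ Complex.I)) (hSconv v₀ hv₀l2 Complex.I)
        simp only [sub_self] at h2
        exact h2.congr (fun k => (hid k).symm)
      have hFkI : Tendsto (fun k => T (fun n => v₀ n - trunc v₀ k n) Complex.I) atTop (nhds (A Complex.I)) := by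
        have : ∀ k, T (fun n => v₀ n - trunc v₀ k n) Complex.I
            = S (fun n => v₀ n - trunc v₀ k n) Complex.I + A Complex.I := by
          intro k
          show S _ Complex.I + lam _ * A Complex.I = _
          rw [hlamdk k, one_mul]
        have h2 := hSdk.add (tendsto_const_nhds (x := A Complex.I))
        rw [zero_add] at h2
        exact h2.congr (fun k => (this k).symm)
      intro hcon
      have h0 : (0:ℂ→ℂ) Complex.I = 0 := rfl
      rw [h0] at hcon
      have := tendsto_nhds_unique hFkI hcon
      exact hAne Complex.I hI this
  -- (11) density of H ∩ Ht
  · intro v hv ε hε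
    have hev := (htail v hv).eventually (eventually_lt_nhds (show (0:ℝ) < ε^2 by positivity))
    obtain ⟨K, hK⟩ := hev.exists
    refine ⟨S (trunc v K), hSmem _ (htrl2 v K), ?_, ?_⟩
    · refine ⟨trunc v K, htrl2 v K, ?_⟩
      funext z
      show S (trunc v K) z = S (trunc v K) z + lam (trunc v K) * A z
      rw [hlamJ _ (htrJ v K), zero_mul, add_zero]
    · have hvals : ∀ n, S (trunc v K) (t n) = trunc v K n := hSval _ (htrl2 v K)
      have heq : (∑' n, μ n * ‖v n - S (trunc v K) (t n)‖^2)
          = ∑' n, μ n * ‖v n - trunc v K n‖^2 := by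
        apply tsum_congr
        intro n
        rw [hvals n]
      rw [heq]
      have h1 : (0:ℝ) ≤ ∑' n, μ n * ‖v n - trunc v K n‖^2 := by
        apply tsum_nonneg
        intro n
        have := (hμ n).le
        positivity
      have h2 : Real.sqrt (∑' n, μ n * ‖v n - trunc v K n‖^2) < Real.sqrt (ε^2) :=
        Real.sqrt_lt_sqrt h1 hK
      rwa [Real.sqrt_sq hε.le] at h2
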